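/- Let p be a prime, L a field of characteristic zero, and V a finite-dimensional L-vector space. Let φ₀ and θ be L-linear automorphisms of V such that φ₀ ∘ θ ∘ φ₀⁻¹ = θ^p, θ has finite order e with gcd(e, p) = 1, and every element of the subgroup of GL(V) generated by φ₀ and θ is a semisimple endomorphism whose trace lies in the image of ℚ in L. For each divisor r of e let V_r = ker Φ_r(θ), where Φ_r ∈ ℚ[X] is the r-th cyclotomic polynomial (evaluated at θ via ℚ[X] → L[X]). Then V is the internal direct sum V = ⊕_{r ∣ e} V_r; each V_r is stable under both θ and φ₀; and for every divisor r of e and every element u of the subgroup generated by φ₀ and θ, the trace of the restriction of u to V_r lies in the image of ℚ in L. -/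

import Mathlib

open Polynomial

lemma cyclo_dvd_comp_aux (r k : ℕ) (hr : 0 < r) (hk : Nat.Coprime k r) :
    cyclotomic r ℚ ∣ (cyclotomic r ℚ).comp (X ^ k) := by
  lift r to ℕ+ using hr
  set K := CyclotomicField r ℚ
  haveI : IsCyclotomicExtension {(r : ℕ)} ℚ K :=
    by convert (inferInstance : @IsCyclotomicExtension {(r : ℕ)} ℚ K _ _
      (CyclotomicField.algebra (r : ℕ) ℚ)); exact Subsingleton.elim _ _
  have hζ : IsPrimitiveRoot (IsCyclotomicExtension.zeta r ℚ K) r :=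
    IsCyclotomicExtension.zeta_spec r ℚ K
  set ζ := IsCyclotomicExtension.zeta r ℚ K
  have h2 : IsPrimitiveRoot (ζ ^ k) r := hζ.pow_of_coprime k hk
  have hmin : cyclotomic r ℚ = minpoly ℚ ζ := cyclotomic_eq_minpoly_rat hζ r.pos
  rw [hmin]
  apply minpoly.dvd
  rw [aeval_comp, aeval_X_pow, ← hmin]
  rw [aeval_def, eval₂_eq_eval_map, map_cyclotomic]
  exact h2.isRoot_cyclotomic r.pos

lemma cyclo_dvd_comp_field (F : Type*) [Field F] [CharZero F] (r k : ℕ) (hr : 0 < r)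
    (hk : Nat.Coprime k r) :
    cyclotomic r F ∣ (cyclotomic r F).comp (X ^ k) := by
  obtain ⟨c, hc⟩ := cyclo_dvd_comp_aux r k hr hk
  refine ⟨c.map (algebraMap ℚ F), ?_⟩
  have := congrArg (Polynomial.map (algebraMap ℚ F)) hc
  rwa [Polynomial.map_comp, Polynomial.map_pow, Polynomial.map_X, Polynomial.map_mul,
    map_cyclotomic] at this

lemma cyclo_coprime_field (F : Type*) [Field F] [CharZero F] {a s : ℕ} (h : a ≠ s) :
    IsCoprime (cyclotomic a F) (cyclotomic s F) := by
  have := (cyclotomic.isCoprime_rat (n := a) (m := s) h).map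
    (mapRingHom (algebraMap ℚ F))
  rwa [coe_mapRingHom, map_cyclotomic, map_cyclotomic] at this

/-- Conjugation by a unit, as an algebra homomorphism. -/
noncomputable def unitsConjAlgHom {R A : Type*} [CommSemiring R] [Semiring A] [Algebra R A]
    (u : Aˣ) : A →ₐ[R] A where
  toFun x := ↑u * x * ↑u⁻¹
  map_one' := by simp
  map_mul' x y := by
    simp only [mul_assoc, Units.inv_mul_cancel_left]
  map_zero' := by simp
  map_add' x y := by
    simp only [mul_add, add_mul]
  commutes' r := by
    show ↑u * algebraMap R A r * ↑u⁻¹ = algebraMap R A r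
    rw [← Algebra.commutes, mul_assoc, Units.mul_inv, mul_one]

lemma unitsConj_aeval {R A : Type*} [CommSemiring R] [Ring A] [Algebra R A]
    (u : Aˣ) (x : A) (q : R[X]) :
    ↑u * aeval x q * ↑u⁻¹ = aeval (↑u * x * ↑u⁻¹ : A) q := by
  have := aeval_algHom_apply (unitsConjAlgHom (R := R) u) x q
  exact this.symm

/-- First step of the ℚ-elementary decomposition (Lemma 5.1 of the paper): for
automorphisms `φ₀, θ` of a finite-dimensional `L`-vector space with `φ₀ θ φ₀⁻¹ = θ^p`,
`θ` of finite order `e` prime to `p`, all elements of `⟨φ₀, θ⟩` semisimple with traces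
in `ℚ`, the space decomposes as the internal direct sum of the `V_r = ker Φ_r(θ)` over the
divisors `r` of `e`; each `V_r` is stable under the subgroup generated by `φ₀` and `θ`
(in particular under `θ` and `φ₀`), and the trace of the restriction to `V_r` of every
element of that subgroup lies in `ℚ`. -/
theorem tame_pair_cyclotomic_decomposition
    (p : ℕ) (hp : p.Prime)
    (L : Type*) [Field L] [CharZero L]
    (V : Type*) [AddCommGroup V] [Module L V] [FiniteDimensional L V]
    (φ₀ θ : (Module.End L V)ˣ)
    (hrel : φ₀ * θ * φ₀⁻¹ = θ ^ p)
    (e : ℕ) (he : 0 < e) (horder : orderOf θ = e) (hcop : Nat.Coprime e p)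
    (hss : ∀ u ∈ Subgroup.closure {φ₀, θ}, ((u : (Module.End L V)ˣ) :
      Module.End L V).IsSemisimple)
    (htr : ∀ u ∈ Subgroup.closure {φ₀, θ},
      LinearMap.trace L V ((u : (Module.End L V)ˣ) : Module.End L V)
        ∈ Set.range (algebraMap ℚ L)) :
    let Vr : {r : ℕ // r ∣ e} → Submodule L V := fun r =>
      LinearMap.ker (aeval ((θ : Module.End L V))
        ((Polynomial.cyclotomic r ℚ).map (algebraMap ℚ L)))
    ∃ hstab : ∀ (r : {r : ℕ // r ∣ e}) (u : (Module.End L V)ˣ),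
        u ∈ Subgroup.closure {φ₀, θ} →
        ∀ x ∈ Vr r, (u : Module.End L V) x ∈ Vr r,
      DirectSum.IsInternal Vr ∧
      (∀ (r : {r : ℕ // r ∣ e}) (u : (Module.End L V)ˣ)
        (hu : u ∈ Subgroup.closure {φ₀, θ}),
        LinearMap.trace L (Vr r) ((u : Module.End L V).restrict (hstab r u hu))
          ∈ Set.range (algebraMap ℚ L)) := by
  intro Vr
  classical
  have hf_e : (θ : Module.End L V) ^ e = 1 := by
    have h := pow_orderOf_eq_one θ
    rw [horder] at h
    calc (θ : Module.End L V) ^ e = ((θ ^ e : (Module.End L V)ˣ) : Module.End L V) := by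
          rw [Units.val_pow_eq_pow_val]
      _ = 1 := by rw [h, Units.val_one]
  set f : Module.End L V := (θ : Module.End L V) with hfdef
  set Kr : {r : ℕ // r ∣ e} → Submodule L V :=
    fun r => LinearMap.ker (aeval f (cyclotomic (r : ℕ) L)) with hKrdef
  have hVrK : Vr = Kr := by
    funext r
    show LinearMap.ker (aeval f ((cyclotomic (r : ℕ) ℚ).map (algebraMap ℚ L)))
      = LinearMap.ker (aeval f (cyclotomic (r : ℕ) L))
    rw [map_cyclotomic]
  rw [hVrK]
  have hθmem : θ ∈ Subgroup.closure ({φ₀, θ} : Set (Module.End L V)ˣ) :=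
    Subgroup.subset_closure (by simp)
  have huinv : ∀ u : (Module.End L V)ˣ, ∀ v : V,
      ((u⁻¹ : (Module.End L V)ˣ) : Module.End L V) ((u : Module.End L V) v) = v := by
    intro u v
    have h1 : ((u⁻¹ : (Module.End L V)ˣ) : Module.End L V) * (u : Module.End L V) = 1 := by
      rw [← Units.val_mul, inv_mul_cancel, Units.val_one]
    calc ((u⁻¹ : (Module.End L V)ˣ) : Module.End L V) ((u : Module.End L V) v)
        = (((u⁻¹ : (Module.End L V)ˣ) : Module.End L V) * (u : Module.End L V)) v := rfl
      _ = v := by rw [h1]; rfl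
  -- polynomials in f preserve each `Kr r`
  have hpoly : ∀ (q : L[X]) (r : {r : ℕ // r ∣ e}), ∀ x ∈ Kr r, aeval f q x ∈ Kr r := by
    intro q r x hx
    simp only [hKrdef, LinearMap.mem_ker] at hx ⊢
    have hcomm : aeval f (cyclotomic (r : ℕ) L) * aeval f q
        = aeval f q * aeval f (cyclotomic (r : ℕ) L) := by
      rw [← map_mul, ← map_mul, mul_comm]
    calc aeval f (cyclotomic (r : ℕ) L) (aeval f q x)
        = (aeval f (cyclotomic (r : ℕ) L) * aeval f q) x := rfl
      _ = (aeval f q * aeval f (cyclotomic (r : ℕ) L)) x := by rw [hcomm]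
      _ = aeval f q (aeval f (cyclotomic (r : ℕ) L) x) := rfl
      _ = 0 := by rw [hx, map_zero]
  -- stability of Kr under φ₀
  have hφstab : ∀ (r : {r : ℕ // r ∣ e}), ∀ x ∈ Kr r, (φ₀ : Module.End L V) x ∈ Kr r := by
    rintro ⟨r, hr⟩ x hx
    simp only [hKrdef, LinearMap.mem_ker] at hx ⊢
    have hrpos : 0 < r := Nat.pos_of_dvd_of_pos hr he
    have hconj : (φ₀ : Module.End L V) * f * ((φ₀⁻¹ : (Module.End L V)ˣ) : Module.End L V)
        = f ^ p := by
      have h := congrArg (Units.val) hrel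
      simpa only [Units.val_mul, Units.val_pow_eq_pow_val] using h
    have hconjq : ∀ q : L[X],
        (φ₀ : Module.End L V) * aeval f q * ((φ₀⁻¹ : (Module.End L V)ˣ) : Module.End L V)
          = aeval (f ^ p) q := by
      intro q
      rw [unitsConj_aeval, hconj]
    have h1 : aeval (f ^ p) (cyclotomic r L) ((φ₀ : Module.End L V) x) = 0 := by
      rw [← hconjq]
      show (φ₀ : Module.End L V)
        (aeval f (cyclotomic r L)
          (((φ₀⁻¹ : (Module.End L V)ˣ) : Module.End L V) ((φ₀ : Module.End L V) x))) = 0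
      rw [huinv φ₀ x, hx, map_zero]
    -- transfer back using k = p ^ (totient e - 1)
    set k := p ^ (e.totient - 1) with hkdef
    have htot : 0 < e.totient := Nat.totient_pos.mpr he
    have hpk : p * k = p ^ e.totient := by
      rw [hkdef, ← pow_succ']
      congr 1
      omega
    have hmod : p ^ e.totient ≡ 1 [MOD e] := Nat.ModEq.pow_totient hcop.symm
    have hfpe : f ^ (p ^ e.totient) = f := by
      obtain ⟨m, hm⟩ : ∃ m, p ^ e.totient = 1 + e * m := by
        have h1' : 1 ≤ p ^ e.totient := Nat.one_le_pow _ _ hp.pos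
        obtain ⟨m, hm⟩ := (Nat.modEq_iff_dvd' h1').mp hmod.symm
        exact ⟨m, by omega⟩
      rw [hm, pow_add, pow_one, pow_mul, hf_e, one_pow, mul_one]
    have hkr : Nat.Coprime k r :=
      (Nat.Coprime.coprime_dvd_right hr hcop.symm).pow_left _
    obtain ⟨c, hc⟩ := cyclo_dvd_comp_field L r k hrpos hkr
    have h2 : aeval (f ^ p) ((cyclotomic r L).comp (X ^ k)) = aeval f (cyclotomic r L) := by
      rw [aeval_comp, aeval_X_pow, ← pow_mul, hpk, hfpe]
    have key : aeval f (cyclotomic r L)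
        = aeval (f ^ p) c * aeval (f ^ p) (cyclotomic r L) := by
      rw [← h2, hc, mul_comm, map_mul]
    rw [key]
    show aeval (f ^ p) c (aeval (f ^ p) (cyclotomic r L) ((φ₀ : Module.End L V) x)) = 0
    rw [h1, map_zero]
  -- stability of Kr under the whole subgroup
  have hstab : ∀ u : (Module.End L V)ˣ, u ∈ Subgroup.closure ({φ₀, θ} : Set (Module.End L V)ˣ) →
      ∀ (r : {r : ℕ // r ∣ e}), ∀ x ∈ Kr r, (u : Module.End L V) x ∈ Kr r := by
    intro u hu
    induction hu using Subgroup.closure_induction with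
    | mem u hu =>
        rcases hu with rfl | rfl
        · exact fun r x hx => hφstab r x hx
        · intro r x hx
          have h := hpoly X r x hx
          rwa [aeval_X] at h
    | one => intro r x hx; simpa using hx
    | mul u v hu hv ihu ihv =>
        intro r x hx
        have h := ihu r _ (ihv r x hx)
        rw [Units.val_mul]
        exact h
    | inv u hu ih =>
        intro r x hx
        have hmap : ∀ y ∈ Kr r, (u : Module.End L V) y ∈ Kr r := fun y hy => ih r y hy
        set g : (Kr r) →ₗ[L] (Kr r) := (u : Module.End L V).restrict hmap with hgdef
        have hginj : Function.Injective g := by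
          intro a b hab
          have h1 : (u : Module.End L V) a = (u : Module.End L V) b :=
            congrArg Subtype.val hab
          have h2 := congrArg (((u⁻¹ : (Module.End L V)ˣ) : Module.End L V)) h1
          rw [huinv, huinv] at h2
          exact Subtype.ext h2
        have hgsurj : Function.Surjective g := LinearMap.injective_iff_surjective.mp hginj
        obtain ⟨y, hy⟩ := hgsurj ⟨x, hx⟩
        have hxy : (u : Module.End L V) (y : V) = x := congrArg Subtype.val hy
        have hfin : ((u⁻¹ : (Module.End L V)ˣ) : Module.End L V) x = (y : V) := by
          rw [← hxy, huinv]
        rw [hfin]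
        exact y.2
  -- kernels of products of cyclotomics
  have hker_prod : ∀ t : Finset ℕ,
      LinearMap.ker (aeval f (∏ s ∈ t, cyclotomic s L)) =
        ⨆ s ∈ t, LinearMap.ker (aeval f (cyclotomic s L)) := by
    intro t
    induction t using Finset.induction_on with
    | empty =>
        rw [Finset.prod_empty, map_one]
        simp [Module.End.one_eq_id]
    | @insert a t ha ih =>
        have hco : IsCoprime (cyclotomic a L) (∏ s ∈ t, cyclotomic s L) :=
          IsCoprime.prod_right fun s hs => cyclo_coprime_field L (fun h => ha (h ▸ hs))
        rw [Finset.prod_insert ha, ← sup_ker_aeval_eq_ker_aeval_mul_of_coprime f hco, ih]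
        rw [Finset.iSup_insert]
  have hsup_top : ⨆ r : {r : ℕ // r ∣ e}, Kr r = ⊤ := by
    have h0 : LinearMap.ker (aeval f (∏ s ∈ e.divisors, cyclotomic s L)) = ⊤ := by
      rw [prod_cyclotomic_eq_X_pow_sub_one he]
      have hz : aeval f ((X : L[X]) ^ e - 1) = 0 := by
        rw [map_sub, map_one, aeval_X_pow, hf_e, sub_self]
      rw [hz]
      exact LinearMap.ker_zero
    rw [hker_prod] at h0
    rw [eq_top_iff, ← h0]
    refine iSup₂_le fun s hs => ?_
    exact le_iSup_of_le ⟨s, (Nat.mem_divisors.mp hs).1⟩ le_rfl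
  have hindep : iSupIndep Kr := by
    intro r
    have hQco : IsCoprime (cyclotomic (r : ℕ) L)
        (∏ s ∈ e.divisors.erase (r : ℕ), cyclotomic s L) :=
      IsCoprime.prod_right fun s hs =>
        cyclo_coprime_field L (Finset.ne_of_mem_erase hs).symm
    refine Disjoint.mono_right ?_ (Polynomial.disjoint_ker_aeval_of_isCoprime f hQco)
    rw [hker_prod]
    refine iSup₂_le fun s hs => ?_
    exact le_iSup₂_of_le (s : ℕ)
      (Finset.mem_erase.mpr ⟨fun h => hs (Subtype.ext h), Nat.mem_divisors.mpr ⟨s.2, he.ne'⟩⟩)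
      le_rfl
  have hinternal : DirectSum.IsInternal Kr :=
    (DirectSum.isInternal_submodule_iff_iSupIndep_and_iSup_eq_top Kr).mpr ⟨hindep, hsup_top⟩
  haveI : Fintype {r : ℕ // r ∣ e} := Fintype.ofInjective
    (fun r : {r : ℕ // r ∣ e} => (⟨(r : ℕ), Nat.mem_divisors.mpr ⟨r.2, he.ne'⟩⟩ : e.divisors))
    (fun a b h => Subtype.ext (congrArg (fun z : {x // x ∈ e.divisors} => (z : ℕ)) h))
  refine ⟨fun r u hu => hstab u hu r, hinternal, ?_⟩
  intro r u hu
  -- the projector onto Kr r as a polynomial in f with rational coefficients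
  obtain ⟨a, b, hab⟩ : IsCoprime (cyclotomic (r : ℕ) ℚ)
      (∏ s ∈ e.divisors.erase (r : ℕ), cyclotomic s ℚ) :=
    IsCoprime.prod_right fun s hs =>
      cyclotomic.isCoprime_rat (Finset.ne_of_mem_erase hs).symm
  set gQ : ℚ[X] := b * ∏ s ∈ e.divisors.erase (r : ℕ), cyclotomic s ℚ with hgQdef
  set gL : L[X] := gQ.map (algebraMap ℚ L) with hgLdef
  have hgLsplit : gL = (b.map (algebraMap ℚ L))
      * ∏ s ∈ e.divisors.erase (r : ℕ), cyclotomic s L := by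
    rw [hgLdef, hgQdef, Polynomial.map_mul, Polynomial.map_prod]
    simp only [map_cyclotomic]
  have habL : (a.map (algebraMap ℚ L)) * cyclotomic (r : ℕ) L + gL = 1 := by
    have h := congrArg (Polynomial.map (algebraMap ℚ L)) hab
    rw [Polynomial.map_add, Polynomial.map_mul, Polynomial.map_one, map_cyclotomic] at h
    rw [hgLdef]
    rw [← h]
  set π : Module.End L V := aeval f gL with hπdef
  set w : Module.End L V := (u : Module.End L V) * π with hwdef
  have hwmaps : ∀ s : {r : ℕ // r ∣ e}, Set.MapsTo w (Kr s) (Kr s) := by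
    intro s x hx
    exact hstab u hu s _ (hpoly gL s x hx)
  have htr_sum := LinearMap.trace_eq_sum_trace_restrict hinternal hwmaps
  have hzero : ∀ s : {r : ℕ // r ∣ e}, s ≠ r → w.restrict (hwmaps s) = 0 := by
    intro s hs
    ext x
    have hx : (x : V) ∈ Kr s := x.2
    have hsdvd : (s : ℕ) ∈ e.divisors.erase (r : ℕ) :=
      Finset.mem_erase.mpr ⟨fun h => hs (Subtype.ext h), Nat.mem_divisors.mpr ⟨s.2, he.ne'⟩⟩
    have hQx : aeval f (∏ t ∈ e.divisors.erase (r : ℕ), cyclotomic t L) (x : V) = 0 := by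
      have hsplit : (∏ t ∈ e.divisors.erase (r : ℕ), cyclotomic t L)
          = (∏ t ∈ (e.divisors.erase (r : ℕ)).erase (s : ℕ), cyclotomic t L)
            * cyclotomic (s : ℕ) L := by
        rw [← Finset.mul_prod_erase _ (fun t => cyclotomic t L) hsdvd, mul_comm]
      have hxker : aeval f (cyclotomic (s : ℕ) L) (x : V) = 0 := hx
      rw [hsplit, map_mul, Module.End.mul_apply, hxker, map_zero]
    have hπx : π (x : V) = 0 := by
      rw [hπdef, hgLsplit, map_mul, Module.End.mul_apply, hQx, map_zero]
    have hwx : w (x : V) = 0 := by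
      rw [hwdef]
      show (u : Module.End L V) (π (x : V)) = 0
      rw [hπx, map_zero]
    exact hwx
  have hid : w.restrict (hwmaps r) = (u : Module.End L V).restrict (hstab u hu r) := by
    ext x
    have hx : (x : V) ∈ Kr r := x.2
    have hxker : aeval f (cyclotomic (r : ℕ) L) (x : V) = 0 := hx
    have hπx : π (x : V) = (x : V) := by
      have h1 : aeval f ((a.map (algebraMap ℚ L)) * cyclotomic (r : ℕ) L) (x : V) = 0 := by
        rw [map_mul, Module.End.mul_apply, hxker, map_zero]
      have h2 : aeval f ((a.map (algebraMap ℚ L)) * cyclotomic (r : ℕ) L + gL) (x : V)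
          = (x : V) := by
        rw [habL, map_one]; rfl
      rw [map_add, LinearMap.add_apply, h1, zero_add] at h2
      exact h2
    have hwx : w (x : V) = (u : Module.End L V) (x : V) := by
      rw [hwdef]
      show (u : Module.End L V) (π (x : V)) = _
      rw [hπx]
    exact hwx
  have hmain : LinearMap.trace L V w
      = LinearMap.trace L (Kr r) ((u : Module.End L V).restrict (hstab u hu r)) := by
    rw [htr_sum, Fintype.sum_eq_single r (fun s hs => by rw [hzero s hs, map_zero]), hid]
  rw [← hmain]
  -- expand w as a ℚ-combination of elements of the subgroup
  have hexp : w = ∑ i ∈ Finset.range (gL.natDegree + 1),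
      gL.coeff i • ((u * θ ^ i : (Module.End L V)ˣ) : Module.End L V) := by
    rw [hwdef, hπdef, aeval_eq_sum_range, Finset.mul_sum]
    refine Finset.sum_congr rfl fun i _ => ?_
    rw [mul_smul_comm, Units.val_mul, Units.val_pow_eq_pow_val]
  rw [hexp, map_sum]
  rw [show Set.range (algebraMap ℚ L) = ((⊥ : Subalgebra ℚ L) : Set L) from
    (by ext z; exact (Algebra.mem_bot).symm)]
  refine sum_mem fun i _ => ?_
  rw [map_smul, hgLdef, Polynomial.coeff_map, smul_eq_mul]
  exact mul_mem (Algebra.mem_bot.mpr ⟨gQ.coeff i, rfl⟩)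
    (Algebra.mem_bot.mpr (htr _ (mul_mem hu (pow_mem hθmem i))))
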